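/- Let K: ℝ^{d_x} → ℝ^{d_y} be a linear operator with operator norm ‖K‖, let f be convex, differentiable, L_f-smooth, let x⋆ ∈ ℝ^{d_x}, y⋆ ∈ ℝ^{d_y}, z⋆ = x⋆, and let η_x, η_y, η_z > 0 satisfy ‖K‖² η_x η_y + L_f η_x η_z ≤ 1. Then for any x, y, z, the quantity Ψ = (1/(2η_x))‖x - x⋆‖² + (1/(2η_y))‖y - y⋆‖² + (1/η_z) D_f(z; z⋆) ± ⟨y - y⋆, K(x - x⋆)⟩ ± ⟨∇f(z) - ∇f(z⋆), x - x⋆⟩ (with either choice of signs) satisfies 0 ≤ Ψ ≤ (1/η_x)‖x - x⋆‖² + (1/η_y)‖y - y⋆‖² + (2/η_z) D_f(z; z⋆). -/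

import Mathlib

open RealInnerProductSpace

abbrev Euc (d : ℕ) := EuclideanSpace ℝ (Fin d)

/-- Bregman divergence. -/
noncomputable def breg {d : ℕ} (f : Euc d → ℝ) (f' : Euc d → Euc d)
    (u v : Euc d) : ℝ :=
  f u - f v - ⟪f' v, u - v⟫

section aux

variable {d : ℕ} (f : Euc d → ℝ) (f' : Euc d → Euc d)

lemma line_hasDerivAt (hdiff : ∀ x, HasGradientAt f (f' x) x) (a v : Euc d) (t : ℝ) :
    HasDerivAt (fun s : ℝ => f (a + s • v)) ⟪f' (a + t • v), v⟫ t := by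
  have hγ : HasDerivAt (fun s : ℝ => a + s • v) v t := by
    simpa using ((hasDerivAt_id t).smul_const v).const_add a
  have hf := (hasGradientAt_iff_hasFDerivAt.mp (hdiff (a + t • v)))
  have := hf.comp_hasDerivAt t hγ
  simp at this; exact this

/-- Gradient inequality for convex functions. -/
lemma grad_ineq (hconv : ConvexOn ℝ Set.univ f)
    (hdiff : ∀ x, HasGradientAt f (f' x) x) (a b : Euc d) :
    f a + ⟪f' a, b - a⟫ ≤ f b := by
  set φ : ℝ → ℝ := fun s : ℝ => f (a + s • (b - a)) with hφ
  have hφconv : ConvexOn ℝ Set.univ φ := by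
    have := hconv.comp_affineMap (AffineMap.lineMap a b : ℝ →ᵃ[ℝ] Euc d)
    have heq : φ = f ∘ (AffineMap.lineMap a b : ℝ →ᵃ[ℝ] Euc d) := by
      funext s
      simp [hφ, AffineMap.lineMap_apply, add_comm]
    rw [heq]
    simpa using this
  have hd : HasDerivAt φ ⟪f' a, b - a⟫ 0 := by
    have := line_hasDerivAt f f' hdiff a (b - a) 0
    simpa using this
  have := hφconv.le_slope_of_hasDerivAt (Set.mem_univ 0) (Set.mem_univ 1)
    one_pos hd
  have hs : slope φ 0 1 = f b - f a := by
    simp [slope_def_field, hφ]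
  rw [hs] at this
  linarith

/-- Descent lemma for functions with Lipschitz gradient. -/
lemma descent_lemma (Lf : ℝ) (hL : 0 < Lf)
    (hdiff : ∀ x, HasGradientAt f (f' x) x)
    (hlip : ∀ x y, ‖f' x - f' y‖ ≤ Lf * ‖x - y‖) (a b : Euc d) :
    f b ≤ f a + ⟪f' a, b - a⟫ + Lf / 2 * ‖b - a‖ ^ 2 := by
  set v : Euc d := b - a with hv
  set g : ℝ → ℝ := fun s : ℝ =>
    f (a + s • v) - s * ⟪f' a, v⟫ - Lf * s ^ 2 / 2 * ‖v‖ ^ 2 with hg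
  have hgd : ∀ t : ℝ, HasDerivAt g
      (⟪f' (a + t • v), v⟫ - ⟪f' a, v⟫ - Lf * t * ‖v‖ ^ 2) t := by
    intro t
    have h1 := line_hasDerivAt f f' hdiff a v t
    have h2 : HasDerivAt (fun s : ℝ => s * ⟪f' a, v⟫) ⟪f' a, v⟫ t := by
      simpa using (hasDerivAt_id t).mul_const ⟪f' a, v⟫
    have h3 : HasDerivAt (fun s : ℝ => Lf * s ^ 2 / 2 * ‖v‖ ^ 2)
        (Lf * t * ‖v‖ ^ 2) t := by
      have : HasDerivAt (fun s : ℝ => s ^ 2) (2 * t) t := by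
        simpa using hasDerivAt_pow 2 t
      have := ((this.const_mul Lf).div_const 2).mul_const (‖v‖ ^ 2)
      rw [show Lf * t * ‖v‖ ^ 2 = Lf * (2 * t) / 2 * ‖v‖ ^ 2 by ring]
      exact this
    exact (h1.sub h2).sub h3
  have hanti : ∀ t ∈ Set.Icc (0:ℝ) 1, ∀ u ∈ Set.Icc (0:ℝ) 1, t ≤ u → g u ≤ g t := by
    have := antitoneOn_of_deriv_nonpos (convex_Icc (0:ℝ) 1)
      (fun t _ => ((hgd t).continuousAt).continuousWithinAt)
      (fun t ht => ((hgd t).differentiableAt).differentiableWithinAt)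
      (fun t ht => by
        rw [(hgd t).deriv]
        rw [interior_Icc] at ht
        have ht' : 0 ≤ t := le_of_lt ht.1
        have hb : ⟪f' (a + t • v) - f' a, v⟫ ≤ Lf * t * ‖v‖ ^ 2 := by
          calc ⟪f' (a + t • v) - f' a, v⟫ ≤ ‖f' (a + t • v) - f' a‖ * ‖v‖ :=
                real_inner_le_norm _ _
            _ ≤ (Lf * ‖(a + t • v) - a‖) * ‖v‖ := by
                have := hlip (a + t • v) a
                nlinarith [norm_nonneg v]
            _ = Lf * t * ‖v‖ ^ 2 := by
                rw [add_sub_cancel_left, norm_smul]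
                simp [abs_of_nonneg ht']
                ring
        rw [inner_sub_left] at hb
        linarith)
    intro t ht u hu htu
    exact this ht hu htu
  have h01 := hanti 0 (by norm_num) 1 (by norm_num) zero_le_one
  have hab : a + v = b := by rw [hv]; abel
  have e0 : g 0 = f a := by
    simp only [hg, zero_smul, add_zero]; ring
  have e1 : g 1 = f b - ⟪f' a, v⟫ - Lf / 2 * ‖v‖ ^ 2 := by
    simp only [hg, one_smul, hab]; ring
  rw [e0, e1] at h01
  linarith

/-- Cocoercivity-type bound: squared gradient difference bounded by Bregman div. -/
lemma grad_sq_le_breg (Lf : ℝ) (hL : 0 < Lf)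
    (hconv : ConvexOn ℝ Set.univ f)
    (hdiff : ∀ x, HasGradientAt f (f' x) x)
    (hlip : ∀ x y, ‖f' x - f' y‖ ≤ Lf * ‖x - y‖) (z zs : Euc d) :
    ‖f' z - f' zs‖ ^ 2 ≤ 2 * Lf * breg f f' z zs := by
  set g : Euc d := f' z - f' zs with hgdef
  set w : Euc d := z - Lf⁻¹ • g with hwdef
  have hB := descent_lemma f f' Lf hL hdiff hlip z w
  have hA := grad_ineq f f' hconv hdiff zs w
  have hwz : w - z = -(Lf⁻¹ • g) := by rw [hwdef]; abel
  have h1 : ⟪f' z, w - z⟫ = -(Lf⁻¹ * ⟪f' z, g⟫) := by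
    rw [hwz, inner_neg_right, real_inner_smul_right]
  have h2 : ‖w - z‖ ^ 2 = Lf⁻¹ ^ 2 * ‖g‖ ^ 2 := by
    rw [hwz, norm_neg, norm_smul, Real.norm_eq_abs, abs_inv, abs_of_pos hL]
    ring
  have h3 : ⟪f' zs, w - zs⟫ = ⟪f' zs, z - zs⟫ - Lf⁻¹ * ⟪f' zs, g⟫ := by
    have : w - zs = (z - zs) - Lf⁻¹ • g := by rw [hwdef]; abel
    rw [this, inner_sub_right, real_inner_smul_right]
  rw [h1, h2] at hB
  rw [h3] at hA
  have hgg : ⟪f' z, g⟫ - ⟪f' zs, g⟫ = ‖g‖ ^ 2 := by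
    rw [← inner_sub_left, ← hgdef, real_inner_self_eq_norm_sq]
  have hbreg : breg f f' z zs = f z - f zs - ⟪f' zs, z - zs⟫ := rfl
  have hLne : Lf ≠ 0 := ne_of_gt hL
  -- combine
  have key : f zs + ⟪f' zs, z - zs⟫ - Lf⁻¹ * ⟪f' zs, g⟫ ≤
      f z - Lf⁻¹ * ⟪f' z, g⟫ + Lf / 2 * (Lf⁻¹ ^ 2 * ‖g‖ ^ 2) := by linarith
  have hinv : Lf / 2 * (Lf⁻¹ ^ 2 * ‖g‖ ^ 2) = ‖g‖ ^ 2 / (2 * Lf) := by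
    field_simp
  have hgg' : Lf⁻¹ * ⟪f' z, g⟫ - Lf⁻¹ * ⟪f' zs, g⟫ = Lf⁻¹ * ‖g‖ ^ 2 := by
    rw [← mul_sub, hgg]
  have : Lf⁻¹ * ‖g‖ ^ 2 - ‖g‖ ^ 2 / (2 * Lf) ≤ breg f f' z zs := by
    rw [hbreg]
    have hkey := key
    rw [hinv] at hkey
    linarith [hgg']
  have h4 : Lf⁻¹ * ‖g‖ ^ 2 - ‖g‖ ^ 2 / (2 * Lf) = ‖g‖ ^ 2 / (2 * Lf) := by
    field_simp; ring
  rw [h4] at this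
  calc ‖g‖ ^ 2 = 2 * Lf * (‖g‖ ^ 2 / (2 * Lf)) := by field_simp
    _ ≤ 2 * Lf * breg f f' z zs := by nlinarith

end aux

set_option maxHeartbeats 1000000 in
/-- Bounds on the primal--dual Lyapunov function, for either choice of the two
signs `s, t ∈ {+1, -1}` on the coupling terms. -/
theorem lyapunov_bounds_primal_dual {dx dy : ℕ} (Lf ηx ηy ηz : ℝ)
    (hL : 0 < Lf) (hηx : 0 < ηx) (hηy : 0 < ηy) (hηz : 0 < ηz)
    (K : Euc dx →L[ℝ] Euc dy)
    (hstep : ‖K‖ ^ 2 * ηx * ηy + Lf * ηx * ηz ≤ 1)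
    (f : Euc dx → ℝ) (f' : Euc dx → Euc dx)
    (hconv : ConvexOn ℝ Set.univ f)
    (hdiff : ∀ x, HasGradientAt f (f' x) x)
    (hlip : ∀ x y, ‖f' x - f' y‖ ≤ Lf * ‖x - y‖)
    (xs zs : Euc dx) (ys : Euc dy) (hxz : zs = xs)
    (s t : ℝ) (hs : s = 1 ∨ s = -1) (ht : t = 1 ∨ t = -1) :
    ∀ (x z : Euc dx) (y : Euc dy),
      0 ≤ (1 / (2 * ηx)) * ‖x - xs‖ ^ 2 + (1 / (2 * ηy)) * ‖y - ys‖ ^ 2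
            + (1 / ηz) * breg f f' z zs
            + s * ⟪y - ys, K (x - xs)⟫ + t * ⟪f' z - f' zs, x - xs⟫ ∧
      (1 / (2 * ηx)) * ‖x - xs‖ ^ 2 + (1 / (2 * ηy)) * ‖y - ys‖ ^ 2
            + (1 / ηz) * breg f f' z zs
            + s * ⟪y - ys, K (x - xs)⟫ + t * ⟪f' z - f' zs, x - xs⟫
        ≤ (1 / ηx) * ‖x - xs‖ ^ 2 + (1 / ηy) * ‖y - ys‖ ^ 2
            + (2 / ηz) * breg f f' z zs := by
  intro x z y
  set a := ‖x - xs‖ with ha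
  set b := ‖y - ys‖ with hb
  set D := breg f f' z zs with hD
  set g := ‖f' z - f' zs‖ with hg
  have ha0 : 0 ≤ a := norm_nonneg _
  have hb0 : 0 ≤ b := norm_nonneg _
  have hg0 : 0 ≤ g := norm_nonneg _
  have hK0 : 0 ≤ ‖K‖ := norm_nonneg _
  have hD0 : 0 ≤ D := by
    have := grad_ineq f f' hconv hdiff zs z
    simp only [hD, breg]
    linarith
  have hgD : g ^ 2 ≤ 2 * Lf * D :=
    grad_sq_le_breg f f' Lf hL hconv hdiff hlip z zs
  -- bound on the first coupling term
  have hc1 : |⟪y - ys, K (x - xs)⟫| ≤ ‖K‖ * a * b := by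
    calc |⟪y - ys, K (x - xs)⟫| ≤ ‖y - ys‖ * ‖K (x - xs)‖ :=
          abs_real_inner_le_norm _ _
      _ ≤ ‖y - ys‖ * (‖K‖ * ‖x - xs‖) := by
          have := K.le_opNorm (x - xs)
          nlinarith [norm_nonneg (y - ys)]
      _ = ‖K‖ * a * b := by rw [← ha, ← hb]; ring
  have hc2 : |⟪f' z - f' zs, x - xs⟫| ≤ g * a := by
    calc |⟪f' z - f' zs, x - xs⟫| ≤ ‖f' z - f' zs‖ * ‖x - xs‖ :=
          abs_real_inner_le_norm _ _
      _ = g * a := by rw [← ha, ← hg]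
  -- AM-GM bounds
  have am1 : ‖K‖ * a * b ≤ ηy * ‖K‖ ^ 2 / 2 * a ^ 2 + 1 / (2 * ηy) * b ^ 2 := by
    have h := sq_nonneg (ηy * ‖K‖ * a - b)
    have h2y : (0:ℝ) < 2 * ηy := by linarith
    have key : ηy * ‖K‖ ^ 2 / 2 * a ^ 2 + 1 / (2 * ηy) * b ^ 2 - ‖K‖ * a * b =
        (ηy * ‖K‖ * a - b) ^ 2 / (2 * ηy) := by
      field_simp; ring
    have hnn : 0 ≤ (ηy * ‖K‖ * a - b) ^ 2 / (2 * ηy) := div_nonneg h h2y.le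
    linarith [key, hnn]
  have am2 : g * a ≤ ηz * Lf / 2 * a ^ 2 + 1 / ηz * D := by
    have h := sq_nonneg (ηz * Lf * a - g)
    have hpos : (0:ℝ) < ηz * Lf := mul_pos hηz hL
    have key : ηz * Lf / 2 * a ^ 2 + 1 / ηz * D - g * a =
        ((ηz * Lf * a - g) ^ 2 / 2 + (2 * Lf * D - g ^ 2) / 2) / (ηz * Lf) := by
      field_simp; ring
    have hnn : 0 ≤ ((ηz * Lf * a - g) ^ 2 / 2 + (2 * Lf * D - g ^ 2) / 2) / (ηz * Lf) := by
      apply div_nonneg _ hpos.le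
      have : 0 ≤ 2 * Lf * D - g ^ 2 := by linarith
      linarith [h]
    linarith [key, hnn]
  -- budget: ηy‖K‖² + ηz Lf ≤ 1/ηx
  have hbudget : ηy * ‖K‖ ^ 2 + ηz * Lf ≤ 1 / ηx := by
    rw [le_div_iff₀ hηx]
    nlinarith [hstep]
  have habs : |s * ⟪y - ys, K (x - xs)⟫ + t * ⟪f' z - f' zs, x - xs⟫| ≤
      1 / (2 * ηx) * a ^ 2 + 1 / (2 * ηy) * b ^ 2 + 1 / ηz * D := by
    have hs1 : |s| = 1 := by rcases hs with h | h <;> simp [h]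
    have ht1 : |t| = 1 := by rcases ht with h | h <;> simp [h]
    calc |s * ⟪y - ys, K (x - xs)⟫ + t * ⟪f' z - f' zs, x - xs⟫|
        ≤ |s * ⟪y - ys, K (x - xs)⟫| + |t * ⟪f' z - f' zs, x - xs⟫| := abs_add_le _ _
      _ = |⟪y - ys, K (x - xs)⟫| + |⟪f' z - f' zs, x - xs⟫| := by
          rw [abs_mul, abs_mul, hs1, ht1, one_mul, one_mul]
      _ ≤ ‖K‖ * a * b + g * a := add_le_add hc1 hc2
      _ ≤ (ηy * ‖K‖ ^ 2 / 2 * a ^ 2 + 1 / (2 * ηy) * b ^ 2) +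
          (ηz * Lf / 2 * a ^ 2 + 1 / ηz * D) := add_le_add am1 am2
      _ ≤ 1 / (2 * ηx) * a ^ 2 + 1 / (2 * ηy) * b ^ 2 + 1 / ηz * D := by
          have h1 : (ηy * ‖K‖ ^ 2 + ηz * Lf) / 2 * a ^ 2 ≤ (1 / ηx) / 2 * a ^ 2 := by
            nlinarith [sq_nonneg a]
          have e1 : (ηy * ‖K‖ ^ 2 + ηz * Lf) / 2 * a ^ 2 =
              ηy * ‖K‖ ^ 2 / 2 * a ^ 2 + ηz * Lf / 2 * a ^ 2 := by ring
          have e2 : (1 / ηx) / 2 * a ^ 2 = 1 / (2 * ηx) * a ^ 2 := by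
            ring
          linarith
  have hpair := abs_le.mp habs
  constructor
  · linarith [hpair.1]
  · have e0 : (2:ℝ) / ηz * D = 2 * (1 / ηz * D) := by ring
    have e1 : (1:ℝ) / ηx * a ^ 2 = 2 * (1 / (2 * ηx) * a ^ 2) := by
      rw [← mul_assoc]; congr 1; field_simp
    have e2 : (1:ℝ) / ηy * b ^ 2 = 2 * (1 / (2 * ηy) * b ^ 2) := by
      rw [← mul_assoc]; congr 1; field_simp
    linarith [hpair.2]
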